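/- Let A be an n × n complex matrix and B an n × n real matrix with nonnegative entries such that ‖A i j‖ ≤ B i j for all i, j. Then the spectral radius of A is at most the spectral radius of B (viewed as a complex matrix via entrywise coercion). Moreover, if ‖A i j‖ < B i j for all i, j and the spectral radius of B is nonzero, then the spectral radius of A is strictly less than that of B. -/

import Mathlib

open scoped ENNReal
open Filter

attribute [local instance] Matrix.linftyOpNormedRing Matrix.linftyOpNormedAlgebra

lemma sr_smul {A : Type*} [NormedRing A] [NormedAlgebra ℂ A] [CompleteSpace A] [Nontrivial A]
    (c : ℂ) (a : A) : spectralRadius ℂ (c • a) = ‖c‖₊ * spectralRadius ℂ a := by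
  rcases eq_or_ne c 0 with rfl | hc
  · simp [spectrum.spectralRadius_zero]
  · rw [spectralRadius, spectralRadius, spectrum.smul_eq_smul c a (spectrum.nonempty a),
      ← Set.image_smul, iSup_image]
    simp_rw [smul_eq_mul, nnnorm_mul, ENNReal.coe_mul, ENNReal.mul_iSup]

lemma entrywise_pow_le (n : ℕ) (A : Matrix (Fin n) (Fin n) ℂ) (B : Matrix (Fin n) (Fin n) ℝ)
    (hB : ∀ i j, 0 ≤ B i j) (hAB : ∀ i j, ‖A i j‖ ≤ B i j) :
    ∀ k i j, ‖(A ^ k) i j‖ ≤ (B ^ k) i j ∧ 0 ≤ (B ^ k) i j := by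
  intro k
  induction k with
  | zero =>
    intro i j
    by_cases h : i = j <;> simp [pow_zero, Matrix.one_apply, h]
  | succ m ih =>
    intro i j
    have hA : (A ^ (m + 1)) i j = ∑ l, (A ^ m) i l * A l j := by
      rw [pow_succ]; rfl
    have hBk : (B ^ (m + 1)) i j = ∑ l, (B ^ m) i l * B l j := by
      rw [pow_succ]; rfl
    constructor
    · rw [hA, hBk]
      refine (norm_sum_le _ _).trans (Finset.sum_le_sum fun l _ => ?_)
      rw [norm_mul]
      exact mul_le_mul (ih i l).1 (hAB l j) (norm_nonneg _) (ih i l).2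
    · rw [hBk]
      exact Finset.sum_nonneg fun l _ => mul_nonneg (ih i l).2 (hB l j)

lemma sr_le (n : ℕ) (hn : 0 < n)
    (A : Matrix (Fin n) (Fin n) ℂ) (B : Matrix (Fin n) (Fin n) ℝ)
    (hB : ∀ i j, 0 ≤ B i j) (hAB : ∀ i j, ‖A i j‖ ≤ B i j) :
    spectralRadius ℂ A ≤ spectralRadius ℂ (B.map (fun x : ℝ => (x : ℂ))) := by
  haveI : Nonempty (Fin n) := ⟨⟨0, hn⟩⟩
  have hpow := entrywise_pow_le n A B hB hAB
  have hmap : ∀ k : ℕ, (B.map (fun x : ℝ => (x : ℂ))) ^ k = (B ^ k).map (fun x : ℝ => (x : ℂ)) := by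
    intro k
    have : (Complex.ofRealHom.mapMatrix (B ^ k) : Matrix (Fin n) (Fin n) ℂ) =
        Complex.ofRealHom.mapMatrix B ^ k := map_pow _ _ _
    exact this.symm
  have key : ∀ k : ℕ, ‖A ^ k‖₊ ≤ ‖(B.map (fun x : ℝ => (x : ℂ))) ^ k‖₊ := by
    intro k
    rw [hmap k, Matrix.linfty_opNNNorm_def, Matrix.linfty_opNNNorm_def]
    refine Finset.sup_mono_fun fun i _ => Finset.sum_le_sum fun j _ => ?_
    have h1 := (hpow k i j).1
    have h2 := (hpow k i j).2
    rw [← NNReal.coe_le_coe]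
    simp only [coe_nnnorm, Matrix.map_apply, Complex.norm_real]
    rw [Real.norm_of_nonneg h2]
    exact h1
  have tA := spectrum.pow_nnnorm_pow_one_div_tendsto_nhds_spectralRadius A
  have tB := spectrum.pow_nnnorm_pow_one_div_tendsto_nhds_spectralRadius
    (B.map (fun x : ℝ => (x : ℂ)))
  refine le_of_tendsto_of_tendsto' tA tB fun k => ?_
  exact ENNReal.rpow_le_rpow (by exact_mod_cast key k) (by positivity)

theorem stmt10 (n : ℕ) (hn : 0 < n)
    (A : Matrix (Fin n) (Fin n) ℂ) (B : Matrix (Fin n) (Fin n) ℝ)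
    (hB : ∀ i j, 0 ≤ B i j) (hAB : ∀ i j, ‖A i j‖ ≤ B i j) :
    spectralRadius ℂ A ≤ spectralRadius ℂ (B.map (fun x : ℝ => (x : ℂ))) ∧
    ((∀ i j, ‖A i j‖ < B i j) →
      spectralRadius ℂ (B.map (fun x : ℝ => (x : ℂ))) ≠ 0 →
      spectralRadius ℂ A < spectralRadius ℂ (B.map (fun x : ℝ => (x : ℂ)))) := by
  haveI : Nonempty (Fin n) := ⟨⟨0, hn⟩⟩
  refine ⟨sr_le n hn A B hB hAB, fun hstrict hne => ?_⟩
  have hBpos : ∀ i j, 0 < B i j := fun i j => lt_of_le_of_lt (norm_nonneg _) (hstrict i j)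
  -- take t := max of ratios
  set t : ℝ := (Finset.univ : Finset (Fin n × Fin n)).sup' (by simp [Finset.univ_nonempty])
      (fun p => ‖A p.1 p.2‖ / B p.1 p.2) with ht
  have ht_nonneg : 0 ≤ t :=
    le_trans (div_nonneg (norm_nonneg (A ⟨0,hn⟩ ⟨0,hn⟩)) (hBpos ⟨0,hn⟩ ⟨0,hn⟩).le)
      (Finset.le_sup' (fun p : Fin n × Fin n => ‖A p.1 p.2‖ / B p.1 p.2)
        (Finset.mem_univ (⟨⟨0,hn⟩,⟨0,hn⟩⟩ : Fin n × Fin n)))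
  have ht_lt : t < 1 := by
    rw [ht]
    refine Finset.sup'_lt_iff _ |>.mpr fun p _ => ?_
    exact (div_lt_one (hBpos p.1 p.2)).mpr (hstrict p.1 p.2)
  have ht_bound : ∀ i j, ‖A i j‖ ≤ t * B i j := by
    intro i j
    have : ‖A i j‖ / B i j ≤ t := Finset.le_sup' (fun p : Fin n × Fin n => ‖A p.1 p.2‖ / B p.1 p.2) (Finset.mem_univ (⟨i, j⟩ : Fin n × Fin n))
    rw [← div_mul_cancel₀ ‖A i j‖ (hBpos i j).ne']
    exact mul_le_mul_of_nonneg_right this (hBpos i j).le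
  have h1 : spectralRadius ℂ A ≤ spectralRadius ℂ ((t • B).map (fun x : ℝ => (x : ℂ))) :=
    sr_le n hn A (t • B) (fun i j => by
        simpa using mul_nonneg ht_nonneg (hB i j))
      (fun i j => by simpa using ht_bound i j)
  have hmapsmul : (t • B).map (fun x : ℝ => (x : ℂ)) =
      (t : ℂ) • (B.map (fun x : ℝ => (x : ℂ))) := by
    ext i j
    simp [Matrix.map_apply, Matrix.smul_apply]
  rw [hmapsmul, sr_smul] at h1
  have hfin : spectralRadius ℂ (B.map (fun x : ℝ => (x : ℂ))) ≠ ⊤ :=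
    ne_top_of_le_ne_top ENNReal.coe_ne_top (spectrum.spectralRadius_le_nnnorm (𝕜 := ℂ) _)
  refine lt_of_le_of_lt h1 ?_
  have : (‖(t : ℂ)‖₊ : ℝ≥0∞) < 1 := by
    have h : ‖(t : ℂ)‖₊ < 1 := by
      rw [← NNReal.coe_lt_coe]
      simpa [Complex.norm_real, abs_of_nonneg ht_nonneg] using ht_lt
    exact_mod_cast h
  calc (‖(t : ℂ)‖₊ : ℝ≥0∞) * spectralRadius ℂ (B.map (fun x : ℝ => (x : ℂ)))
      < 1 * spectralRadius ℂ (B.map (fun x : ℝ => (x : ℂ))) :=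
        (mul_comm _ _).trans_lt ((ENNReal.mul_lt_mul_right hne hfin this).trans_eq (mul_comm _ _))
  _ = _ := one_mul _
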